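/- Let G be a connected Eulerian digraph (d^+(v) = d^-(v) for all v) on n vertices with integer Laplacian L(G), and let v be a vertex. Then the Laplacian L(G) is equivalent over ℤ (via unimodular row and column operations) to the block diagonal matrix 0 ⊕ L(G,v), where L(G,v) is the reduced Laplacian obtained by deleting row and column v. In particular, coker(L(G)^t) ≅ ℤ ⊕ coker(L(G,v)^t). -/

import Mathlib

open Matrix

/-- Quotient of a product module by a product of submodules. -/
noncomputable def quotProdEquiv {R M N : Type*} [CommRing R] [AddCommGroup M] [Module R M]
    [AddCommGroup N] [Module R N] (p : Submodule R M) (q : Submodule R N) :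
    ((M × N) ⧸ p.prod q) ≃ₗ[R] (M ⧸ p) × (N ⧸ q) :=
  (Submodule.quotEquivOfEq _ _ (by rw [LinearMap.ker_prodMap, Submodule.ker_mkQ,
      Submodule.ker_mkQ])).trans
    (LinearMap.quotKerEquivOfSurjective (p.mkQ.prodMap q.mkQ)
      ((p.mkQ_surjective).prodMap q.mkQ_surjective))

/-- Summing an indicator of `v.succAbove t = j` over `t`. -/
lemma sum_ite_succAbove_eq {n : ℕ} (v : Fin (n + 1)) (j : Fin (n + 1)) (c : ℤ) :
    ∑ t : Fin n, (if v.succAbove t = j then c else 0) = if j = v then 0 else c := by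
  by_cases hj : j = v
  · rw [if_pos hj]
    refine Finset.sum_eq_zero fun t _ => if_neg ?_
    rw [hj]; exact Fin.succAbove_ne v t
  · rw [if_neg hj]
    obtain ⟨t0, ht0⟩ := Fin.exists_succAbove_eq hj
    rw [Finset.sum_congr rfl (fun t _ => show (if v.succAbove t = j then c else 0) =
        if t = t0 then c else 0 by
      by_cases h : t = t0
      · rw [if_pos h, if_pos (by rw [h]; exact ht0)]
      · rw [if_neg h, if_neg (fun hc => h (Fin.succAbove_right_injective
          (hc.trans ht0.symm)))])]
    simp

/-- Summing an indicator of `j = v.succAbove t` over `t`. -/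
lemma sum_ite_succAbove_eq' {n : ℕ} (v : Fin (n + 1)) (j : Fin (n + 1)) (c : ℤ) :
    ∑ t : Fin n, (if j = v.succAbove t then c else 0) = if j = v then 0 else c := by
  rw [← sum_ite_succAbove_eq v j c]
  refine Finset.sum_congr rfl fun t _ => ?_
  by_cases h : v.succAbove t = j
  · rw [if_pos h, if_pos h.symm]
  · rw [if_neg h, if_neg (fun hc => h hc.symm)]

/-- For a connected Eulerian digraph `G` on `n + 1` vertices and a vertex `v`, the integer
Laplacian `L(G)` is equivalent over `ℤ` (via unimodular matrices) to the block diagonal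
matrix `0 ⊕ L(G,v)` (the matrix obtained from `L(G)` by zeroing out row and column `v`,
whose nonzero block is the reduced Laplacian); consequently
`coker(L(G)ᵗ) ≅ ℤ ⊕ coker(L(G,v)ᵗ)`. -/
theorem laplacian_equiv_reduced (n : ℕ) (m : Fin (n + 1) → Fin (n + 1) → ℕ)
    (v : Fin (n + 1))
    (hconn : ∀ u w : Fin (n + 1), Relation.ReflTransGen (fun a b => 0 < m a b) u w)
    (heul : ∀ u : Fin (n + 1), ∑ w, m u w = ∑ w, m w u)
    (L : Matrix (Fin (n + 1)) (Fin (n + 1)) ℤ)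
    (hL : L = Matrix.of fun u w =>
      if u = w then ∑ z ∈ Finset.univ.erase u, (m u z : ℤ) else -(m u w : ℤ)) :
    (∃ Pm Qm : Matrix (Fin (n + 1)) (Fin (n + 1)) ℤ,
      IsUnit Pm.det ∧ IsUnit Qm.det ∧
        Pm * L * Qm = Matrix.of fun u w => if u = v ∨ w = v then 0 else L u w) ∧
    Nonempty (((Fin (n + 1) → ℤ) ⧸ LinearMap.range (Matrix.toLin' Lᵀ)) ≃ₗ[ℤ]
      ℤ × ((Fin n → ℤ) ⧸ LinearMap.range
        (Matrix.toLin' (L.submatrix v.succAbove v.succAbove)ᵀ))) := by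
  -- row sums of `L` are zero
  have hrow : ∀ u, ∑ w, L u w = 0 := by
    intro u
    rw [← Finset.add_sum_erase _ (fun w => L u w) (Finset.mem_univ u)]
    have h1 : L u u = ∑ z ∈ Finset.univ.erase u, (m u z : ℤ) := by rw [hL]; simp
    have h2 : ∀ w ∈ Finset.univ.erase u, L u w = -(m u w : ℤ) := fun w hw => by
      rw [hL]; exact if_neg (Ne.symm (Finset.ne_of_mem_erase hw))
    rw [h1, Finset.sum_congr rfl h2, Finset.sum_neg_distrib]
    ring
  -- column sums of `L` are zero
  have hcol : ∀ w, ∑ u, L u w = 0 := by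
    intro w
    rw [← Finset.add_sum_erase _ (fun u => L u w) (Finset.mem_univ w)]
    have h1 : L w w = (∑ z, (m w z : ℤ)) - m w w := by
      rw [hL, Matrix.of_apply, if_pos rfl, Finset.sum_erase_eq_sub (Finset.mem_univ w)]
    have h2 : ∀ u ∈ Finset.univ.erase w, L u w = -(m u w : ℤ) := fun u hu => by
      rw [hL]; exact if_neg (Finset.ne_of_mem_erase hu)
    rw [h1, Finset.sum_congr rfl h2, Finset.sum_neg_distrib,
      Finset.sum_erase_eq_sub (f := fun u => (m u w : ℤ)) (Finset.mem_univ w)]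
    have h3 : (∑ z, (m w z : ℤ)) = ∑ u, (m u w : ℤ) := by exact_mod_cast heul w
    rw [h3]; ring
  set P : Matrix (Fin (n + 1)) (Fin (n + 1)) ℤ :=
    Matrix.of fun i j => if i = v then 1 else if i = j then 1 else 0 with hPdef
  set P' : Matrix (Fin (n + 1)) (Fin (n + 1)) ℤ :=
    Matrix.of fun i j => if i = v then (if j = v then 1 else -1) else if i = j then 1 else 0
    with hP'def
  set Q : Matrix (Fin (n + 1)) (Fin (n + 1)) ℤ :=
    Matrix.of fun i j => if j = v then 1 else if i = j then 1 else 0 with hQdef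
  set Q' : Matrix (Fin (n + 1)) (Fin (n + 1)) ℤ :=
    Matrix.of fun i j => if j = v then (if i = v then 1 else -1) else if i = j then 1 else 0
    with hQ'def
  have hPP' : P * P' = 1 := by
    ext i j
    rw [Matrix.mul_apply]
    by_cases hi : i = v
    · rw [Finset.sum_congr rfl (fun k _ => by
        rw [hPdef, Matrix.of_apply, if_pos hi, one_mul])]
      rw [Fin.sum_univ_succAbove (fun k => P' k j) v]
      have hv : P' v j = if j = v then 1 else -1 := by rw [hP'def]; exact if_pos rfl
      have ht : ∀ t, P' (v.succAbove t) j = if v.succAbove t = j then 1 else 0 := fun t => by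
        rw [hP'def]; exact if_neg (Fin.succAbove_ne v t)
      rw [hv, Finset.sum_congr rfl (fun t _ => ht t), sum_ite_succAbove_eq]
      by_cases hj : j = v
      · rw [if_pos hj, if_pos hj, Matrix.one_apply, if_pos (hi.trans hj.symm)]; ring
      · rw [if_neg hj, if_neg hj, Matrix.one_apply, if_neg (fun h => hj (h.symm.trans hi))]; ring
    · rw [Finset.sum_eq_single i (fun k _ hk => by
        rw [hPdef, Matrix.of_apply, if_neg hi, if_neg (Ne.symm hk), zero_mul]) (by simp)]
      rw [hPdef, Matrix.of_apply, if_neg hi, if_pos rfl, one_mul, hP'def, Matrix.of_apply,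
        if_neg hi, Matrix.one_apply]
  have hQ'Q : Q' * Q = 1 := by
    ext i j
    rw [Matrix.mul_apply]
    by_cases hj : j = v
    · rw [Finset.sum_congr rfl (fun k _ => by
        rw [hQdef, Matrix.of_apply, if_pos hj, mul_one])]
      rw [Fin.sum_univ_succAbove (fun k => Q' i k) v]
      have hv : Q' i v = if i = v then 1 else -1 := by rw [hQ'def]; exact if_pos rfl
      have ht : ∀ t, Q' i (v.succAbove t) = if i = v.succAbove t then 1 else 0 := fun t => by
        rw [hQ'def]; exact if_neg (Fin.succAbove_ne v t)
      rw [hv, Finset.sum_congr rfl (fun t _ => ht t), sum_ite_succAbove_eq']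
      by_cases hi : i = v
      · rw [if_pos hi, if_pos hi, Matrix.one_apply, if_pos (hi.trans hj.symm)]; ring
      · rw [if_neg hi, if_neg hi, Matrix.one_apply, if_neg (fun h => hi (h.trans hj))]; ring
    · rw [Finset.sum_eq_single j (fun k _ hk => by
        rw [hQdef, Matrix.of_apply, if_neg hj, if_neg hk, mul_zero]) (by simp)]
      rw [hQdef, Matrix.of_apply, if_neg hj, if_pos rfl, mul_one, hQ'def, Matrix.of_apply,
        if_neg hj, Matrix.one_apply]
  set D : Matrix (Fin (n + 1)) (Fin (n + 1)) ℤ :=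
    Matrix.of fun u w => if u = v ∨ w = v then 0 else L u w with hDdef
  have hLQ : ∀ u j, (L * Q) u j = if j = v then 0 else L u j := by
    intro u j
    rw [Matrix.mul_apply]
    by_cases hj : j = v
    · rw [if_pos hj]
      rw [Finset.sum_congr rfl (fun k _ => by
        rw [hQdef, Matrix.of_apply, if_pos hj, mul_one])]
      exact hrow u
    · rw [if_neg hj]
      rw [Finset.sum_eq_single j (fun k _ hk => by
        rw [hQdef, Matrix.of_apply, if_neg hj, if_neg hk, mul_zero]) (by simp)]
      rw [hQdef, Matrix.of_apply, if_neg hj, if_pos rfl, mul_one]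
  have hPLQ : P * L * Q = D := by
    rw [Matrix.mul_assoc]
    ext i j
    rw [Matrix.mul_apply]
    by_cases hi : i = v
    · rw [Finset.sum_congr rfl (fun k _ => by
        rw [hPdef, Matrix.of_apply, if_pos hi, one_mul, hLQ k j])]
      rw [hDdef, Matrix.of_apply, if_pos (Or.inl hi)]
      by_cases hj : j = v
      · simp [hj]
      · rw [Finset.sum_congr rfl (fun k _ => if_neg hj)]
        exact hcol j
    · rw [Finset.sum_eq_single i (fun k _ hk => by
        rw [hPdef, Matrix.of_apply, if_neg hi, if_neg (Ne.symm hk), zero_mul]) (by simp)]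
      rw [hPdef, Matrix.of_apply, if_neg hi, if_pos rfl, one_mul, hLQ i j, hDdef,
        Matrix.of_apply]
      by_cases hj : j = v
      · rw [if_pos hj, if_pos (Or.inr hj)]
      · rw [if_neg hj, if_neg (by tauto)]
  refine ⟨⟨P, Q, Matrix.isUnit_det_of_right_inverse hPP',
    Matrix.isUnit_det_of_left_inverse hQ'Q, hPLQ⟩, ?_⟩
  -- cokernel part
  have hQQ' : Q * Q' = 1 := mul_eq_one_comm.mp hQ'Q
  have hP'P : P' * P = 1 := mul_eq_one_comm.mp hPP'
  set L' : Matrix (Fin n) (Fin n) ℤ := L.submatrix v.succAbove v.succAbove with hL'def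
  have heQ1 : Matrix.toLin' Qᵀ ∘ₗ Matrix.toLin' Q'ᵀ = LinearMap.id := by
    rw [← Matrix.toLin'_mul, ← Matrix.transpose_mul, hQ'Q, Matrix.transpose_one,
      Matrix.toLin'_one]
  have heQ2 : Matrix.toLin' Q'ᵀ ∘ₗ Matrix.toLin' Qᵀ = LinearMap.id := by
    rw [← Matrix.toLin'_mul, ← Matrix.transpose_mul, hQQ', Matrix.transpose_one,
      Matrix.toLin'_one]
  set eQ : (Fin (n + 1) → ℤ) ≃ₗ[ℤ] (Fin (n + 1) → ℤ) :=
    LinearEquiv.ofLinear (Matrix.toLin' Qᵀ) (Matrix.toLin' Q'ᵀ) heQ1 heQ2 with heQdef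
  have hPsurj : LinearMap.range (Matrix.toLin' Pᵀ) = ⊤ := by
    rw [LinearMap.range_eq_top]
    intro y
    refine ⟨Matrix.toLin' P'ᵀ y, ?_⟩
    have h : Matrix.toLin' Pᵀ ∘ₗ Matrix.toLin' P'ᵀ = LinearMap.id := by
      rw [← Matrix.toLin'_mul, ← Matrix.transpose_mul, hP'P, Matrix.transpose_one,
        Matrix.toLin'_one]
    simpa using LinearMap.ext_iff.mp h y
  have hDt : Dᵀ = Qᵀ * (Lᵀ * Pᵀ) := by
    rw [← hPLQ, Matrix.transpose_mul, Matrix.transpose_mul]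
  have hmap1 : Submodule.map (eQ : (Fin (n+1) → ℤ) →ₗ[ℤ] (Fin (n+1) → ℤ))
      (LinearMap.range (Matrix.toLin' Lᵀ)) = LinearMap.range (Matrix.toLin' Dᵀ) := by
    rw [hDt, Matrix.toLin'_mul, Matrix.toLin'_mul, LinearMap.range_comp,
      LinearMap.range_comp_of_range_eq_top _ hPsurj]
    rfl
  have e1 : ((Fin (n + 1) → ℤ) ⧸ LinearMap.range (Matrix.toLin' Lᵀ)) ≃ₗ[ℤ]
      ((Fin (n + 1) → ℤ) ⧸ LinearMap.range (Matrix.toLin' Dᵀ)) :=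
    Submodule.Quotient.equiv _ _ eQ hmap1
  -- splitting the coordinates at `v`
  set f2 : (Fin (n + 1) → ℤ) →ₗ[ℤ] ℤ × (Fin n → ℤ) :=
    (LinearMap.proj v).prod (LinearMap.funLeft ℤ ℤ v.succAbove) with hf2def
  have hf2app : ∀ x, f2 x = (x v, fun i => x (v.succAbove i)) := fun x => rfl
  have hf2bij : Function.Bijective f2 := by
    constructor
    · intro x y hxy
      rw [hf2app, hf2app] at hxy
      have h1 : x v = y v := congrArg Prod.fst hxy
      have h2 : ∀ i, x (v.succAbove i) = y (v.succAbove i) := fun i =>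
        congrFun (congrArg Prod.snd hxy) i
      funext u
      by_cases hu : u = v
      · rw [hu]; exact h1
      · obtain ⟨i, rfl⟩ := Fin.exists_succAbove_eq (Ne.symm (Ne.symm hu))
        exact h2 i
    · rintro ⟨a, y⟩
      refine ⟨v.insertNth a y, ?_⟩
      rw [hf2app]
      simp
  set e2 : (Fin (n + 1) → ℤ) ≃ₗ[ℤ] ℤ × (Fin n → ℤ) := LinearEquiv.ofBijective f2 hf2bij
    with he2def
  have he2app : ∀ x, e2 x = (x v, fun i => x (v.succAbove i)) := fun x => rfl
  have hkey : ∀ x : Fin (n + 1) → ℤ, e2 (Matrix.toLin' Dᵀ x) =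
      (0, Matrix.toLin' L'ᵀ (fun i => x (v.succAbove i))) := by
    intro x
    rw [he2app]
    have h1 : Matrix.toLin' Dᵀ x v = 0 := by
      rw [Matrix.toLin'_apply]
      show ∑ w, Dᵀ v w * x w = 0
      refine Finset.sum_eq_zero fun w _ => ?_
      rw [Matrix.transpose_apply, hDdef, Matrix.of_apply, if_pos (Or.inr rfl), zero_mul]
    have h2 : ∀ i, Matrix.toLin' Dᵀ x (v.succAbove i) =
        Matrix.toLin' L'ᵀ (fun j => x (v.succAbove j)) i := by
      intro i
      rw [Matrix.toLin'_apply, Matrix.toLin'_apply]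
      show ∑ w, Dᵀ (v.succAbove i) w * x w = ∑ j, L'ᵀ i j * x (v.succAbove j)
      rw [Fin.sum_univ_succAbove (fun w => Dᵀ (v.succAbove i) w * x w) v]
      have hz : Dᵀ (v.succAbove i) v = 0 := by
        rw [Matrix.transpose_apply, hDdef, Matrix.of_apply, if_pos (Or.inl rfl)]
      rw [hz, zero_mul, zero_add]
      refine Finset.sum_congr rfl fun j _ => ?_
      rw [Matrix.transpose_apply, Matrix.transpose_apply, hDdef, Matrix.of_apply,
        if_neg (by push_neg; exact ⟨Fin.succAbove_ne v j, Fin.succAbove_ne v i⟩),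
        hL'def, Matrix.submatrix_apply]
    exact Prod.ext h1 (funext h2)
  have hmap2 : Submodule.map (e2 : (Fin (n+1) → ℤ) →ₗ[ℤ] ℤ × (Fin n → ℤ))
      (LinearMap.range (Matrix.toLin' Dᵀ)) =
      (⊥ : Submodule ℤ ℤ).prod (LinearMap.range (Matrix.toLin' L'ᵀ)) := by
    apply le_antisymm
    · rintro _ ⟨_, ⟨x, rfl⟩, rfl⟩
      simp only [LinearEquiv.coe_coe]
      rw [hkey x]
      exact ⟨rfl, ⟨_, rfl⟩⟩
    · rintro ⟨a, y⟩ ⟨ha, z, hz⟩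
      set x0 : Fin (n + 1) → ℤ := v.insertNth 0 z with hx0
      refine ⟨Matrix.toLin' Dᵀ x0, ⟨_, rfl⟩, ?_⟩
      simp only [LinearEquiv.coe_coe]
      rw [hkey]
      have hres : (fun i => x0 (v.succAbove i)) = z := by
        funext i; rw [hx0]; simp
      rw [hres, hz]
      simp only [Submodule.mem_bot] at ha
      rw [ha]
  have e3 : ((Fin (n + 1) → ℤ) ⧸ LinearMap.range (Matrix.toLin' Dᵀ)) ≃ₗ[ℤ]
      (ℤ × (Fin n → ℤ)) ⧸ (⊥ : Submodule ℤ ℤ).prod (LinearMap.range (Matrix.toLin' L'ᵀ)) :=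
    Submodule.Quotient.equiv _ _ e2 hmap2
  have e4 := quotProdEquiv (⊥ : Submodule ℤ ℤ) (LinearMap.range (Matrix.toLin' L'ᵀ))
  have e5 : (ℤ ⧸ (⊥ : Submodule ℤ ℤ)) ≃ₗ[ℤ] ℤ := Submodule.quotEquivOfEqBot _ rfl
  exact ⟨e1.trans (e3.trans (e4.trans (e5.prodCongr (LinearEquiv.refl ℤ _))))⟩
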